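/- For 0 ≤ t₁,...,tₙ ≤ 1, the polynomial map f(z₁,...,zₙ) with components √(tⱼ) zⱼ for 1 ≤ j ≤ n, √(1−tⱼ) zⱼ² for 1 ≤ j ≤ n, and √(2−tⱼ−tₖ) zⱼzₖ for 1 ≤ j < k ≤ n, satisfies ‖f(z)‖² = 1 whenever ‖z‖² = 1; that is, f maps the unit sphere S^(2n−1) ⊂ ℂⁿ into the unit sphere of the target space. -/
import Mathlib

lemma key_sum (n : ℕ) (c x : Fin n → ℝ) :
    ∑ j : Fin n, ∑ k : Fin n, c j * (x j * x k) =
      ∑ j, c j * x j ^ 2 +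
        ∑ j : Fin n, ∑ k : Fin n, if j < k then (c j + c k) * (x j * x k) else 0 := by
  have h1 : ∀ j k : Fin n, c j * (x j * x k) =
      (if j = k then c j * x j ^ 2 else 0)
      + (if j < k then c j * (x j * x k) else 0)
      + (if k < j then c j * (x j * x k) else 0) := by
    intro j k
    rcases lt_trichotomy j k with h | h | h
    · simp [h, h.ne, asymm h, not_lt_of_gt]
    · simp [h, sq]
    · simp [h, h.ne', asymm h, not_lt_of_gt]
  calc ∑ j : Fin n, ∑ k : Fin n, c j * (x j * x k)
      = ∑ j : Fin n, ∑ k : Fin n, ((if j = k then c j * x j ^ 2 else 0)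
        + (if j < k then c j * (x j * x k) else 0)
        + (if k < j then c j * (x j * x k) else 0)) := by
        exact Finset.sum_congr rfl fun j _ => Finset.sum_congr rfl fun k _ => h1 j k
    _ = (∑ j : Fin n, ∑ k : Fin n, if j = k then c j * x j ^ 2 else 0)
        + (∑ j : Fin n, ∑ k : Fin n, if j < k then c j * (x j * x k) else 0)
        + (∑ j : Fin n, ∑ k : Fin n, if k < j then c j * (x j * x k) else 0) := by
        simp [Finset.sum_add_distrib]
    _ = ∑ j, c j * x j ^ 2 +
        ∑ j : Fin n, ∑ k : Fin n, if j < k then (c j + c k) * (x j * x k) else 0 := by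
        rw [Finset.sum_comm (f := fun j k => if k < j then c j * (x j * x k) else 0)]
        simp only [Finset.sum_ite_eq, Finset.mem_univ, if_true]
        rw [add_assoc]
        congr 1
        rw [← Finset.sum_add_distrib]
        refine Finset.sum_congr rfl fun j _ => ?_
        rw [← Finset.sum_add_distrib]
        refine Finset.sum_congr rfl fun k _ => ?_
        by_cases h : j < k <;> simp [h] ; ring

theorem stmt_11 (n : ℕ) (t : Fin n → ℝ)
    (ht0 : ∀ j, 0 ≤ t j) (ht1 : ∀ j, t j ≤ 1)
    (z : Fin n → ℂ) (hz : ∑ j, ‖z j‖ ^ 2 = 1) :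
    (∑ j, ‖(Real.sqrt (t j) : ℂ) * z j‖ ^ 2)
      + (∑ j, ‖(Real.sqrt (1 - t j) : ℂ) * z j ^ 2‖ ^ 2)
      + (∑ j, ∑ k, if j < k then
          ‖(Real.sqrt (2 - t j - t k) : ℂ) * (z j * z k)‖ ^ 2 else 0)
      = 1 := by
  set x : Fin n → ℝ := fun j => ‖z j‖ ^ 2 with hxdef
  have hn : ∀ (a : ℝ) (w : ℂ), 0 ≤ a → ‖(Real.sqrt a : ℂ) * w‖ ^ 2 = a * ‖w‖ ^ 2 := by
    intro a w ha
    rw [norm_mul, Complex.norm_real, Real.norm_eq_abs, abs_of_nonneg (Real.sqrt_nonneg a),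
      mul_pow, Real.sq_sqrt ha]
  have e1 : (∑ j, ‖(Real.sqrt (t j) : ℂ) * z j‖ ^ 2) = ∑ j, t j * x j :=
    Finset.sum_congr rfl fun j _ => hn _ _ (ht0 j)
  have e2 : (∑ j, ‖(Real.sqrt (1 - t j) : ℂ) * z j ^ 2‖ ^ 2)
      = ∑ j, (1 - t j) * x j ^ 2 := by
    refine Finset.sum_congr rfl fun j _ => ?_
    rw [hn _ _ (by linarith [ht1 j])]
    rw [norm_pow]
  have e3 : (∑ j, ∑ k, if j < k then
        ‖(Real.sqrt (2 - t j - t k) : ℂ) * (z j * z k)‖ ^ 2 else 0)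
      = ∑ j : Fin n, ∑ k : Fin n,
          if j < k then ((1 - t j) + (1 - t k)) * (x j * x k) else 0 := by
    refine Finset.sum_congr rfl fun j _ => Finset.sum_congr rfl fun k _ => ?_
    by_cases h : j < k
    · simp only [h, if_true]
      rw [hn _ _ (by linarith [ht1 j, ht1 k]), norm_mul]
      ring
    · simp [h]
  rw [e1, e2, e3]
  have hk := key_sum n (fun j => 1 - t j) x
  have hd : ∑ j : Fin n, ∑ k : Fin n, (1 - t j) * (x j * x k)
      = ∑ j, (1 - t j) * x j := by
    refine Finset.sum_congr rfl fun j _ => ?_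
    rw [← Finset.mul_sum, ← Finset.mul_sum, hz, mul_one]
  rw [hd] at hk
  have : ∑ j : Fin n, ∑ k : Fin n,
      (if j < k then ((1 - t j) + (1 - t k)) * (x j * x k) else 0)
      = ∑ j, (1 - t j) * x j - ∑ j, (1 - t j) * x j ^ 2 := by linarith
  rw [this]
  have hs : ∑ j, (1 - t j) * x j = 1 - ∑ j, t j * x j := by
    simp only [sub_mul, one_mul, Finset.sum_sub_distrib]
    rw [hz]  -- maybe x not defeq displayed; check
  linarith
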